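/- For v_n = (1/2^n, (-1)^n/n), the point (1, -ln 2) belongs to A(v_n) but not to A_abs(v_n). -/

import Mathlib

open Filter Topology Real

/-- Euclidean norm on the plane `ℝ × ℝ`. -/
noncomputable def enorm2 (v : ℝ × ℝ) : ℝ := Real.sqrt (v.1 ^ 2 + v.2 ^ 2)

/-- Euclidean inner product on the plane. -/
def dot2 (u v : ℝ × ℝ) : ℝ := u.1 * v.1 + u.2 * v.2

/-- `u` is a Levy vector of the series `∑ x n`: `u` is a unit vector and for every `ε > 0`
the sum of norms of the terms lying in the cone `S_ε(u)` diverges. -/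
noncomputable def IsLevy (x : ℕ → ℝ × ℝ) (u : ℝ × ℝ) : Prop :=
  enorm2 u = 1 ∧ ∀ ε : ℝ, 0 < ε → ¬ Summable (fun n =>
    if (1 - ε) * enorm2 u * enorm2 (x n) ≤ dot2 u (x n) then enorm2 (x n) else 0)

/-- The series `∑ x n` converges (in the given order) to `s`. -/
def ConvergesTo (x : ℕ → ℝ × ℝ) (s : ℝ × ℝ) : Prop :=
  Tendsto (fun N => ∑ n ∈ Finset.range N, x n) atTop (𝓝 s)

/-- The series `∑ x n` is conditionally convergent. -/
noncomputable def CondConv (x : ℕ → ℝ × ℝ) : Prop :=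
  (∃ s, ConvergesTo x s) ∧ ¬ Summable (fun n => enorm2 (x n))

/-- `s` belongs to the achievement set `A(x)`. -/
def Achieves (x : ℕ → ℝ × ℝ) (s : ℝ × ℝ) : Prop :=
  ∃ E : Set ℕ, ConvergesTo (Set.indicator E x) s

/-- `s` belongs to the absolute achievement set `A_abs(x)`. -/
noncomputable def AchievesAbs (x : ℕ → ℝ × ℝ) (s : ℝ × ℝ) : Prop :=
  ∃ E : Set ℕ, Summable (fun n => enorm2 (Set.indicator E x n)) ∧
    HasSum (Set.indicator E x) s

/-- The reduction property of a series `∑ (x n, y n)`. -/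
noncomputable def ReductionProperty (x y : ℕ → ℝ) : Prop :=
  Tendsto (fun n => |y n| / |x n|) atTop atTop ∧
  ∀ ε : ℝ, 0 < ε → ∀ t ∈ Set.Ioo (-ε) ε, ∀ N : ℕ,
    ∃ m : ℕ, ∃ k : ℕ → ℕ, 0 < m ∧ StrictMono k ∧ N ≤ k 0 ∧
      |(∑ i ∈ Finset.range m, x (k i)) - t| < ε / 2 ∧
      ∀ j : ℕ, 1 ≤ j → j ≤ m →
        |∑ i ∈ Finset.range j, x (k i)| < ε ∧ |∑ i ∈ Finset.range j, y (k i)| < ε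

lemma alt_sum_eq_harm (N : ℕ) :
    ∑ i ∈ Finset.range (2 * N), (-1 : ℝ) ^ i * (1 / (i + 1)) =
      (harmonic (2 * N) : ℝ) - (harmonic N : ℝ) := by
  induction N with
  | zero => simp
  | succ n ih =>
    have h2 : 2 * (n + 1) = (2 * n) + 1 + 1 := by ring
    rw [h2, Finset.sum_range_succ, Finset.sum_range_succ, ih, harmonic_succ, harmonic_succ,
      harmonic_succ]
    have e1 : (-1 : ℝ) ^ (2 * n) = 1 := by
      rw [pow_mul]; norm_num
    have e2 : (-1 : ℝ) ^ (2 * n + 1) = -1 := by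
      rw [pow_succ, e1]; norm_num
    rw [e1, e2]
    push_cast
    have h1 : (2 * (n : ℝ) + 1) ≠ 0 := by positivity
    have h3 : (2 * (n : ℝ) + 1 + 1) ≠ 0 := by positivity
    have h4 : ((n : ℝ) + 1) ≠ 0 := by positivity
    field_simp
    ring

lemma tendsto_alt_harm_log :
    Tendsto (fun n => ∑ i ∈ Finset.range n, (-1 : ℝ) ^ i * (1 / (i + 1))) atTop
      (𝓝 (Real.log 2)) := by
  obtain ⟨l, hl⟩ :=
    Antitone.tendsto_alternating_series_of_tendsto_zero
      (f := fun i : ℕ => 1 / ((i : ℝ) + 1))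
      (fun i j hij => by
        have : (i : ℝ) + 1 ≤ (j : ℝ) + 1 := by exact_mod_cast by omega
        exact one_div_le_one_div_of_le (by positivity) this)
      (by simpa using (tendsto_one_div_add_atTop_nhds_zero_nat : Tendsto (fun n : ℕ => 1 / ((n : ℝ) + 1)) atTop (𝓝 0)))
  have hmul : Tendsto (fun N : ℕ => 2 * N) atTop atTop :=
    tendsto_atTop_mono (fun n => Nat.le_mul_of_pos_left n two_pos) tendsto_id
  have hsub : Tendsto (fun N => ∑ i ∈ Finset.range (2 * N), (-1 : ℝ) ^ i * (1 / (i + 1)))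
      atTop (𝓝 l) := hl.comp hmul
  have hh : Tendsto (fun N : ℕ => (harmonic (2 * N) : ℝ) - (harmonic N : ℝ)) atTop
      (𝓝 (Real.log 2)) := by
    have t1 := ((tendsto_harmonic_sub_log.comp hmul).sub tendsto_harmonic_sub_log).add
      (tendsto_const_nhds (x := Real.log 2) (f := atTop (α := ℕ)))
    rw [sub_self, zero_add] at t1
    refine t1.congr' ?_
    filter_upwards [eventually_gt_atTop 0] with N hN
    have hN' : ((N : ℝ)) ≠ 0 := by exact_mod_cast hN.ne'
    simp only [Function.comp]
    have : Real.log ((2 * N : ℕ) : ℝ) = Real.log 2 + Real.log N := by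
      push_cast
      rw [Real.log_mul two_ne_zero hN']
    rw [this]; ring
  have : l = Real.log 2 :=
    tendsto_nhds_unique (hsub.congr fun N => alt_sum_eq_harm N) hh
  rwa [this] at hl

lemma hasSum_half_pow : HasSum (fun n : ℕ => (1 : ℝ) / 2 ^ (n + 1)) 1 := by
  have h := hasSum_geometric_of_lt_one (r := (1/2 : ℝ)) (by norm_num) (by norm_num)
  have h2 := h.mul_left (1/2 : ℝ)
  norm_num at h2
  refine h2.congr_fun fun n => ?_
  rw [pow_succ]
  rw [one_div_pow]; field_simp

lemma enorm2_ge_abs_snd (v : ℝ × ℝ) : |v.2| ≤ Real.sqrt (v.1 ^ 2 + v.2 ^ 2) := by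
  rw [← Real.sqrt_sq_eq_abs]
  exact Real.sqrt_le_sqrt (by nlinarith [sq_nonneg v.1])

lemma not_summable_one_div_succ : ¬ Summable (fun n : ℕ => 1 / ((n : ℝ) + 1)) := by
  intro h
  have : Summable (fun n : ℕ => 1 / ((n + 1 : ℕ) : ℝ)) := by
    refine h.congr fun n => by push_cast; ring
  rw [summable_nat_add_iff (f := fun n : ℕ => 1 / (n : ℝ)) 1] at this
  exact Real.not_summable_one_div_natCast this

theorem stmt_15 :
    Achieves (fun n : ℕ => ((1 : ℝ) / 2 ^ (n + 1), (-1 : ℝ) ^ (n + 1) / (n + 1)))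
      (1, -Real.log 2) ∧
    ¬ AchievesAbs (fun n : ℕ => ((1 : ℝ) / 2 ^ (n + 1), (-1 : ℝ) ^ (n + 1) / (n + 1)))
      (1, -Real.log 2) := by
  set x : ℕ → ℝ × ℝ := fun n : ℕ => ((1 : ℝ) / 2 ^ (n + 1), (-1 : ℝ) ^ (n + 1) / (n + 1))
    with hx
  have hfst : Tendsto (fun N => ∑ n ∈ Finset.range N, (1 : ℝ) / 2 ^ (n + 1)) atTop (𝓝 1) :=
    hasSum_half_pow.tendsto_sum_nat
  have hsnd : Tendsto (fun N => ∑ n ∈ Finset.range N, (-1 : ℝ) ^ (n + 1) / (n + 1)) atTop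
      (𝓝 (-Real.log 2)) := by
    have h := tendsto_alt_harm_log.neg
    refine h.congr fun N => ?_
    rw [← Finset.sum_neg_distrib]
    refine Finset.sum_congr rfl fun i _ => ?_
    rw [pow_succ]
    ring
  have hconv : ConvergesTo x (1, -Real.log 2) := by
    have : (fun N => ∑ n ∈ Finset.range N, x n) =
        fun N => (∑ n ∈ Finset.range N, (1 : ℝ) / 2 ^ (n + 1),
          ∑ n ∈ Finset.range N, (-1 : ℝ) ^ (n + 1) / (n + 1)) := by
      funext N
      rw [Prod.ext_iff]
      constructor
      · rw [Prod.fst_sum]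
      · rw [Prod.snd_sum]
    rw [ConvergesTo, this]
    exact hfst.prodMk_nhds hsnd
  constructor
  · exact ⟨Set.univ, by rwa [Set.indicator_univ]⟩
  · rintro ⟨E, hsum, hHasSum⟩
    have h1 : HasSum (fun n => (Set.indicator E x n).1) 1 := by
      have := hHasSum.mapL (ContinuousLinearMap.fst ℝ ℝ ℝ)
      simpa using this
    have hEuniv : ∀ n, n ∈ E := by
      by_contra hc
      push_neg at hc
      obtain ⟨n0, hn0⟩ := hc
      have hle : ∀ n, (Set.indicator E x n).1 ≤ (1 : ℝ) / 2 ^ (n + 1) := by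
        intro n
        by_cases h : n ∈ E
        · rw [Set.indicator_of_mem h]
        · rw [Set.indicator_of_notMem h]
          positivity
      have hlt : (Set.indicator E x n0).1 < (1 : ℝ) / 2 ^ (n0 + 1) := by
        rw [Set.indicator_of_notMem hn0]
        positivity
      exact absurd (hasSum_lt hle hlt h1 hasSum_half_pow) (lt_irrefl 1)
    have hind : Set.indicator E x = x := by
      funext n
      exact Set.indicator_of_mem (hEuniv n) x
    rw [hind] at hsum
    apply not_summable_one_div_succ
    refine Summable.of_nonneg_of_le (fun n => by positivity) (fun n => ?_) hsum
    have h2 := enorm2_ge_abs_snd (x n)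
    have : |(x n).2| = 1 / ((n : ℝ) + 1) := by
      simp only [hx]
      rw [abs_div, abs_pow, abs_neg, abs_one, one_pow]
      rw [abs_of_nonneg (by positivity)]
    rw [this] at h2
    exact h2
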